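/- Let (Z_n) be a sequence of centered real Gaussian random variables with Var(Z_n) = a(n) > 0, let (Y_n) be centered square-integrable random variables with Var(Y_n) = b(n), and set X_n := Z_n + Y_n. If b(n)/a(n) → 0 as n → ∞, then liminf_{n→∞} (1/a(n)) E[X_n² · 1_{(-∞,0)}(X_n)] ≥ 1/2. -/

import Mathlib

namespace GaussAux

open MeasureTheory Filter Real Set NNReal ENNReal

lemma ioi_integral (t : ℝ) (ht : 0 < t) :
    ∫ x in Ioi (0:ℝ), x ^ 2 * Real.exp (-x ^ 2 / (2 * t))
      = t * Real.sqrt (2 * π * t) / 2 := by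
  have hb : (0:ℝ) < (2*t)⁻¹ := by positivity
  have h := integral_rpow_mul_exp_neg_mul_rpow (p := 2) (q := 2) (b := (2*t)⁻¹)
    two_pos (by norm_num) hb
  have hL : ∫ x in Ioi (0:ℝ), x ^ (2:ℝ) * Real.exp (-(2*t)⁻¹ * x ^ (2:ℝ))
      = ∫ x in Ioi (0:ℝ), x ^ 2 * Real.exp (-x ^ 2 / (2 * t)) := by
    refine setIntegral_congr_fun measurableSet_Ioi (fun x hx => ?_)
    rw [show x ^ (2:ℝ) = x ^ 2 by
      rw [show (2:ℝ) = ((2:ℕ):ℝ) by norm_num, Real.rpow_natCast]]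
    ring_nf
  rw [hL] at h
  rw [h]
  have hg : Real.Gamma (((2:ℝ)+1)/2) = Real.sqrt π / 2 := by
    rw [show ((2:ℝ)+1)/2 = 1/2 + 1 by norm_num, Real.Gamma_add_one (by norm_num),
      Real.Gamma_one_half_eq]
    ring
  rw [hg, show (-((2:ℝ)+1)/2) = -((3:ℝ)/2) by norm_num,
    Real.rpow_neg (by positivity), Real.inv_rpow (by positivity), inv_inv,
    show (3:ℝ)/2 = 1 + 1/2 by norm_num, Real.rpow_add (by positivity),
    Real.rpow_one, ← Real.sqrt_eq_rpow,
    show 2*π*t = (2*t)*π by ring, Real.sqrt_mul (by positivity),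
    show 2*t*π = 2*(t*π) by ring, Real.sqrt_mul (by norm_num : (0:ℝ) ≤ 2),
    Real.sqrt_mul ht.le]
  ring

lemma iio_integral (t : ℝ) (ht : 0 < t) :
    ∫ x in Iio (0:ℝ), x ^ 2 * Real.exp (-x ^ 2 / (2 * t))
      = t * Real.sqrt (2 * π * t) / 2 := by
  have h := integral_comp_neg_Ioi (c := (0:ℝ))
    (f := fun x => x ^ 2 * Real.exp (-x ^ 2 / (2 * t)))
  simp only [neg_zero, neg_sq] at h
  rw [← MeasureTheory.integral_Iic_eq_integral_Iio, ← h, ioi_integral t ht]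

lemma integrable_sq_exp (t : ℝ) (ht : 0 < t) :
    Integrable (fun x : ℝ => x ^ 2 * Real.exp (-x ^ 2 / (2 * t))) := by
  have hb : (0:ℝ) < (2*t)⁻¹ := by positivity
  have h := integrable_rpow_mul_exp_neg_mul_sq hb (s := (2:ℝ)) (by norm_num)
  refine h.congr ?_
  filter_upwards with x
  rw [show x ^ (2:ℝ) = x ^ 2 by
    rw [show (2:ℝ) = ((2:ℕ):ℝ) by norm_num, Real.rpow_natCast]]
  ring_nf

lemma line_integral (t : ℝ) (ht : 0 < t) :
    ∫ x, x ^ 2 * Real.exp (-x ^ 2 / (2 * t)) = t * Real.sqrt (2 * π * t) := by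
  have hi := integrable_sq_exp t ht
  rw [← intervalIntegral.integral_Iio_add_Ici (b := (0:ℝ)) hi.integrableOn hi.integrableOn,
    MeasureTheory.integral_Ici_eq_integral_Ioi, iio_integral t ht, ioi_integral t ht]
  ring

open ProbabilityTheory

lemma pdf_form (v : ℝ≥0) (x : ℝ) :
    gaussianPDFReal 0 v x = (Real.sqrt (2 * π * v))⁻¹ * Real.exp (-x ^ 2 / (2 * v)) := by
  simp only [gaussianPDFReal, sub_zero]

lemma repr (v : ℝ≥0) (hv : v ≠ 0) :
    gaussianReal 0 v
      = (volume : Measure ℝ).withDensity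
          (fun x => ((gaussianPDFReal 0 v x).toNNReal : ℝ≥0∞)) := by
  rw [gaussianReal_of_var_ne_zero _ hv]
  rfl

lemma meas_pdfN (v : ℝ≥0) : Measurable (fun x => (gaussianPDFReal 0 v x).toNNReal) :=
  (measurable_gaussianPDFReal 0 v).real_toNNReal

lemma gauss_iio (v : ℝ≥0) (hv : v ≠ 0) :
    ∫ x in Iio (0:ℝ), x ^ 2 ∂(gaussianReal 0 v) = (v : ℝ) / 2 := by
  have ht : (0:ℝ) < (v:ℝ) := by
    simpa [pos_iff_ne_zero] using hv
  rw [repr v hv,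
    setIntegral_withDensity_eq_setIntegral_smul (meas_pdfN v) _ measurableSet_Iio]
  have : ∀ x : ℝ, (gaussianPDFReal 0 v x).toNNReal • (x ^ 2)
      = (Real.sqrt (2 * π * v))⁻¹ * (x ^ 2 * Real.exp (-x ^ 2 / (2 * (v:ℝ)))) := by
    intro x
    rw [NNReal.smul_def, Real.coe_toNNReal _ (gaussianPDFReal_nonneg 0 v x), pdf_form]
    rw [smul_eq_mul]; ring
  simp_rw [this]
  rw [MeasureTheory.integral_const_mul, iio_integral (v:ℝ) ht]
  have hs : Real.sqrt (2 * π * (v:ℝ)) ≠ 0 := by positivity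
  field_simp

lemma gauss_line (v : ℝ≥0) (hv : v ≠ 0) :
    ∫ x, x ^ 2 ∂(gaussianReal 0 v) = (v : ℝ) := by
  have ht : (0:ℝ) < (v:ℝ) := by simpa [pos_iff_ne_zero] using hv
  rw [repr v hv, integral_withDensity_eq_integral_smul (meas_pdfN v)]
  have : ∀ x : ℝ, (gaussianPDFReal 0 v x).toNNReal • (x ^ 2)
      = (Real.sqrt (2 * π * v))⁻¹ * (x ^ 2 * Real.exp (-x ^ 2 / (2 * (v:ℝ)))) := by
    intro x
    rw [NNReal.smul_def, Real.coe_toNNReal _ (gaussianPDFReal_nonneg 0 v x), pdf_form]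
    rw [smul_eq_mul]; ring
  simp_rw [this]
  rw [MeasureTheory.integral_const_mul, line_integral (v:ℝ) ht]
  have hs : Real.sqrt (2 * π * (v:ℝ)) ≠ 0 := by positivity
  field_simp

lemma gauss_integrable (v : ℝ≥0) (hv : v ≠ 0) :
    Integrable (fun x : ℝ => x ^ 2) (gaussianReal 0 v) := by
  have ht : (0:ℝ) < (v:ℝ) := by simpa [pos_iff_ne_zero] using hv
  rw [repr v hv, integrable_withDensity_iff_integrable_smul (meas_pdfN v)]
  have : ∀ x : ℝ, (gaussianPDFReal 0 v x).toNNReal • (x ^ 2)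
      = (Real.sqrt (2 * π * v))⁻¹ * (x ^ 2 * Real.exp (-x ^ 2 / (2 * (v:ℝ)))) := by
    intro x
    rw [NNReal.smul_def, Real.coe_toNNReal _ (gaussianPDFReal_nonneg 0 v x), pdf_form]
    rw [smul_eq_mul]; ring
  simp_rw [this]
  exact (integrable_sq_exp (v:ℝ) ht).const_mul _

lemma gauss_ind (v : ℝ≥0) (hv : v ≠ 0) :
    ∫ x, x ^ 2 * Set.indicator (Set.Iio (0:ℝ)) (fun _ => (1:ℝ)) x ∂(gaussianReal 0 v)
      = (v : ℝ) / 2 := by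
  have h1 : (fun x : ℝ => x ^ 2 * Set.indicator (Set.Iio (0:ℝ)) (fun _ => (1:ℝ)) x)
      = Set.indicator (Set.Iio (0:ℝ)) (fun x : ℝ => x ^ 2) := by
    funext x
    by_cases hx : x ∈ Set.Iio (0:ℝ) <;> simp [hx]
  rw [h1, MeasureTheory.integral_indicator measurableSet_Iio, gauss_iio v hv]

noncomputable def ind (x : ℝ) : ℝ := Set.indicator (Set.Iio (0:ℝ)) (fun _ => (1:ℝ)) x

lemma ind_of_neg {x : ℝ} (h : x < 0) : ind x = 1 := by simp [ind, h]
lemma ind_of_nonneg {x : ℝ} (h : 0 ≤ x) : ind x = 0 := by simp [ind, not_lt.mpr h]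
lemma ind_nonneg (x : ℝ) : 0 ≤ ind x := by
  rcases lt_or_ge x 0 with h | h
  · rw [ind_of_neg h]; norm_num
  · rw [ind_of_nonneg h]
lemma ind_le_one (x : ℝ) : ind x ≤ 1 := by
  rcases lt_or_ge x 0 with h | h
  · rw [ind_of_neg h]
  · rw [ind_of_nonneg h]; norm_num

lemma key_pt (ε z y : ℝ) (hε : 0 < ε) :
    z ^ 2 * ind z ≤ (z + y) ^ 2 * ind (z + y) + y ^ 2 + (ε * z ^ 2 + y ^ 2 / ε) := by
  have hu : ε * (y ^ 2 / ε) = y ^ 2 := by field_simp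
  have hunn : 0 ≤ y ^ 2 / ε := by positivity
  rcases lt_or_ge z 0 with hz | hz
  · rcases lt_or_ge (z + y) 0 with hx | hx
    · rw [ind_of_neg hz, ind_of_neg hx]
      nlinarith [sq_nonneg (ε * z + y), sq_nonneg y, mul_pos hε hε]
    · rw [ind_of_neg hz, ind_of_nonneg hx]
      nlinarith [mul_nonneg (by linarith : (0:ℝ) ≤ y + z) (by linarith : (0:ℝ) ≤ y - z),
        mul_nonneg hε.le (sq_nonneg z)]
  · rw [ind_of_nonneg hz]
    have h1 : 0 ≤ (z + y) ^ 2 * ind (z + y) :=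
      mul_nonneg (sq_nonneg _) (ind_nonneg _)
    nlinarith [mul_nonneg hε.le (sq_nonneg z), sq_nonneg y]

lemma upper_pt (z y : ℝ) : (z + y) ^ 2 * ind (z + y) ≤ 2 * z ^ 2 + 2 * y ^ 2 := by
  have h1 : (z + y) ^ 2 * ind (z + y) ≤ (z + y) ^ 2 * 1 :=
    mul_le_mul_of_nonneg_left (ind_le_one _) (sq_nonneg _)
  nlinarith [sq_nonneg (z - y)]

end GaussAux

open MeasureTheory Filter

open GaussAux ProbabilityTheory in
/-- Gaussian perturbation lemma: if `X_n = Z_n + Y_n` with `Z_n ~ N(0, a(n))` and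
`Y_n` centered with variance `b(n)`, and `b(n)/a(n) → 0`, then
`liminf (1/a(n)) E[X_n² 1_{X_n < 0}] ≥ 1/2`. -/
theorem gaussian_perturbation {Ω : Type*} [MeasurableSpace Ω] (P : Measure Ω)
    [IsProbabilityMeasure P] (Z Y : ℕ → Ω → ℝ) (a : ℕ → NNReal) (b : ℕ → ℝ)
    (hZmeas : ∀ n, Measurable (Z n))
    (hZ : ∀ n, P.map (Z n) = ProbabilityTheory.gaussianReal 0 (a n))
    (ha : ∀ n, 0 < a n)
    (hY : ∀ n, MemLp (Y n) 2 P)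
    (hYc : ∀ n, ∫ ω, Y n ω ∂P = 0)
    (hYv : ∀ n, ∫ ω, (Y n ω)^2 ∂P = b n)
    (hlim : Tendsto (fun n => b n / (a n : ℝ)) atTop (nhds 0)) :
    (1/2 : ℝ) ≤
      liminf (fun n => ((a n : ℝ))⁻¹ *
        ∫ ω, (Z n ω + Y n ω)^2 *
          Set.indicator (Set.Iio (0:ℝ)) (fun _ => (1:ℝ)) (Z n ω + Y n ω) ∂P) atTop := by
  show (1/2 : ℝ) ≤ liminf (fun n => ((a n : ℝ))⁻¹ *
      ∫ ω, (Z n ω + Y n ω)^2 * ind (Z n ω + Y n ω) ∂P) atTop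
  set f : ℕ → ℝ := fun n => ((a n : ℝ))⁻¹ *
      ∫ ω, (Z n ω + Y n ω)^2 * ind (Z n ω + Y n ω) ∂P with hf
  have hindm : Measurable ind := by
    have : ind = Set.indicator (Set.Iio (0:ℝ)) (fun _ => (1:ℝ)) := rfl
    rw [this]; exact measurable_const.indicator measurableSet_Iio
  have hsqm : Measurable (fun x : ℝ => x ^ 2) := measurable_id.pow_const 2
  have hgm : Measurable (fun x : ℝ => x ^ 2 * ind x) := hsqm.mul hindm
  have hapos : ∀ n, (0:ℝ) < (a n : ℝ) := fun n => NNReal.coe_pos.mpr (ha n)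
  have EZsq : ∀ n, ∫ ω, (Z n ω)^2 ∂P = (a n : ℝ) := by
    intro n
    have h : ∫ ω, (Z n ω)^2 ∂P = ∫ x, x^2 ∂(P.map (Z n)) :=
      (integral_map (hZmeas n).aemeasurable hsqm.aestronglyMeasurable).symm
    rw [h, hZ n, gauss_line _ (ha n).ne']
  have EZind : ∀ n, ∫ ω, (Z n ω)^2 * ind (Z n ω) ∂P = (a n : ℝ)/2 := by
    intro n
    have h : ∫ ω, (Z n ω)^2 * ind (Z n ω) ∂P
        = ∫ x, x^2 * ind x ∂(P.map (Z n)) :=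
      (integral_map (hZmeas n).aemeasurable hgm.aestronglyMeasurable).symm
    rw [h, hZ n]
    exact gauss_ind _ (ha n).ne'
  have IZsq : ∀ n, Integrable (fun ω => (Z n ω)^2) P := by
    intro n
    have h := gauss_integrable (a n) (ha n).ne'
    rw [← hZ n] at h
    exact (integrable_map_measure hsqm.aestronglyMeasurable
      (hZmeas n).aemeasurable).mp h
  have hZ2 : ∀ n, MemLp (Z n) 2 P := fun n =>
    (memLp_two_iff_integrable_sq (hZmeas n).aestronglyMeasurable).mpr (IZsq n)
  have hXae : ∀ n, AEMeasurable (fun ω => Z n ω + Y n ω) P := fun n =>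
    (hZmeas n).aemeasurable.add (hY n).aestronglyMeasurable.aemeasurable
  have IXsq : ∀ n, Integrable (fun ω => (Z n ω + Y n ω)^2) P := fun n =>
    ((hZ2 n).add (hY n)).integrable_sq
  have IYsq : ∀ n, Integrable (fun ω => (Y n ω)^2) P := fun n => (hY n).integrable_sq
  have IXind : ∀ n, Integrable (fun ω => (Z n ω + Y n ω)^2 * ind (Z n ω + Y n ω)) P := by
    intro n
    refine (IXsq n).mono (hgm.comp_aemeasurable (hXae n)).aestronglyMeasurable ?_
    filter_upwards with ω
    have h0 := ind_nonneg (Z n ω + Y n ω)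
    have h1 := ind_le_one (Z n ω + Y n ω)
    rw [Real.norm_eq_abs, Real.norm_eq_abs,
      abs_of_nonneg (mul_nonneg (sq_nonneg _) h0), abs_of_nonneg (sq_nonneg _)]
    nlinarith [sq_nonneg (Z n ω + Y n ω)]
  have IZind : ∀ n, Integrable (fun ω => (Z n ω)^2 * ind (Z n ω)) P := by
    intro n
    refine (IZsq n).mono (hgm.comp (hZmeas n)).aestronglyMeasurable ?_
    filter_upwards with ω
    have h0 := ind_nonneg (Z n ω)
    have h1 := ind_le_one (Z n ω)
    rw [Real.norm_eq_abs, Real.norm_eq_abs,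
      abs_of_nonneg (mul_nonneg (sq_nonneg _) h0), abs_of_nonneg (sq_nonneg _)]
    nlinarith [sq_nonneg (Z n ω)]
  have lower : ∀ ε : ℝ, 0 < ε → ∀ n,
      1/2 - ε - (b n/(a n:ℝ))*(1+1/ε) ≤ f n := by
    intro ε hε n
    have ht := hapos n
    have hmono := integral_mono (IZind n)
      (((IXind n).add (IYsq n)).add (((IZsq n).const_mul ε).add ((IYsq n).div_const ε)))
      (fun ω => key_pt ε (Z n ω) (Y n ω) hε)
    simp only [Pi.add_apply] at hmono
    have i1 : Integrable (fun ω => (Z n ω + Y n ω) ^ 2 * ind (Z n ω + Y n ω) + Y n ω ^ 2) P :=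
      (IXind n).add (IYsq n)
    have i2 : Integrable (fun ω => ε * Z n ω ^ 2 + Y n ω ^ 2 / ε) P :=
      ((IZsq n).const_mul ε).add ((IYsq n).div_const ε)
    have i3 : Integrable (fun ω => ε * Z n ω ^ 2) P := (IZsq n).const_mul ε
    have i4 : Integrable (fun ω => Y n ω ^ 2 / ε) P := (IYsq n).div_const ε
    rw [EZind n, integral_add i1 i2, integral_add (IXind n) (IYsq n),
      integral_add i3 i4,
      MeasureTheory.integral_const_mul, MeasureTheory.integral_div,
      EZsq n, hYv n] at hmono
    have heq : (1:ℝ)/2 - ε - (b n/(a n:ℝ))*(1+1/ε)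
        = ((a n:ℝ))⁻¹ * ((a n:ℝ)/2 - (b n + (ε * (a n:ℝ) + b n / ε))) := by
      field_simp
      ring
    rw [heq, hf]
    exact mul_le_mul_of_nonneg_left (by linarith) (inv_nonneg.mpr ht.le)
  have upper : ∀ n, f n ≤ 2 + 2*(b n/(a n:ℝ)) := by
    intro n
    have ht := hapos n
    have hmono := integral_mono (IXind n)
      (((IZsq n).const_mul 2).add ((IYsq n).const_mul 2))
      (fun ω => upper_pt (Z n ω) (Y n ω))
    simp only [Pi.add_apply] at hmono
    have i5 : Integrable (fun ω => 2 * Z n ω ^ 2) P := (IZsq n).const_mul 2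
    have i6 : Integrable (fun ω => 2 * Y n ω ^ 2) P := (IYsq n).const_mul 2
    rw [integral_add i5 i6,
      MeasureTheory.integral_const_mul, MeasureTheory.integral_const_mul,
      EZsq n, hYv n] at hmono
    have heq : 2 + 2*(b n/(a n:ℝ)) = ((a n:ℝ))⁻¹ * (2*(a n:ℝ) + 2*b n) := by
      field_simp
    rw [heq, hf]
    exact mul_le_mul_of_nonneg_left hmono (inv_nonneg.mpr ht.le)
  have hcob : IsCoboundedUnder (· ≥ ·) atTop f := by
    apply isCoboundedUnder_ge_of_eventually_le atTop (x := 4)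
    have h1 : ∀ᶠ n in atTop, b n / (a n:ℝ) ≤ 1 :=
      hlim.eventually (eventually_le_nhds one_pos)
    filter_upwards [h1] with n hn
    calc f n ≤ 2 + 2*(b n/(a n:ℝ)) := upper n
      _ ≤ 4 := by linarith
  have key : ∀ ε : ℝ, 0 < ε → 1/2 - 2*ε ≤ liminf f atTop := by
    intro ε hε
    apply le_liminf_of_le hcob
    have h2 : Tendsto (fun n => (b n/(a n:ℝ))*(1+1/ε)) atTop (nhds 0) := by
      simpa using hlim.mul_const (1+1/ε)
    have h3 : ∀ᶠ n in atTop, (b n/(a n:ℝ))*(1+1/ε) ≤ ε :=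
      h2.eventually (eventually_le_nhds hε)
    filter_upwards [h3] with n hn
    have := lower ε hε n
    linarith
  by_contra hcon
  push_neg at hcon
  have := key ((1/2 - liminf f atTop)/4) (by linarith)
  linarith
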